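/- Under the conformal β-change, the squared length of the torsion vector transforms as *c² = τ^{-1}[c² + ((n+1)/ *L) A_β], where A_β = c_β + ((n+1)/(4 *L)) m², c_β = c_i b^i, m² = m_i m^i, and τ = e^σ(*L/L). -/
import Mathlib


/-- Under the conformal β-change, the squared length of the torsion vector
transforms as `*c² = τ⁻¹[c² + ((n+1)/ *L) A_β]`, where `A_β = c_β + ((n+1)/(4 *L)) m²`,
`c_β = cᵢ bⁱ`, `m² = mᵢ mⁱ`, and `τ = e^σ(*L/L)`. -/
theorem conformal_beta_change_c_squared
    (n : ℕ) (c cup m mup l lup b bup : Fin n → ℝ)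
    (σ L β Ls τ : ℝ)
    (hLs : Ls = Real.exp σ * L + β) (hL0 : L ≠ 0) (hLs0 : Ls ≠ 0)
    (hτ : τ = Real.exp σ * (Ls / L)) (hτ0 : τ ≠ 0)
    (c2 m2 cβ : ℝ)
    (hc2 : c2 = ∑ i, c i * cup i)
    (hm2 : m2 = ∑ i, m i * mup i)
    (hcβ : cβ = ∑ i, c i * bup i)
    (hcl : (∑ i, c i * lup i) = 0)
    (hml : (∑ i, m i * lup i) = 0)
    (hcm : (∑ i, c i * mup i) = cβ)
    (hmc : (∑ i, m i * cup i) = cβ)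
    (csLow csUp : Fin n → ℝ)
    (hcsLow : ∀ i, csLow i = c i + (((n : ℝ) + 1) / (2 * Ls)) * m i)
    (hcsUp : ∀ k, csUp k = τ⁻¹^2 *
      (τ * cup k - cβ * lup k + (((n : ℝ) + 1) / (2 * Ls)) * (τ * mup k - m2 * lup k)))
    (Aβ : ℝ) (hAβ : Aβ = cβ + (((n : ℝ) + 1) / (4 * Ls)) * m2) :
    (∑ i, csLow i * csUp i) = τ⁻¹ * (c2 + (((n : ℝ) + 1) / Ls) * Aβ) := by
  have key : (∑ i, csLow i * csUp i)
      = τ⁻¹^2 * (τ * (∑ i, c i * cup i) - cβ * (∑ i, c i * lup i)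
        + (((n:ℝ)+1)/(2*Ls)) * (τ * (∑ i, c i * mup i) - m2 * (∑ i, c i * lup i))
        + (((n:ℝ)+1)/(2*Ls)) * (τ * (∑ i, m i * cup i) - cβ * (∑ i, m i * lup i)
          + (((n:ℝ)+1)/(2*Ls)) * (τ * (∑ i, m i * mup i) - m2 * (∑ i, m i * lup i)))) := by
    simp only [Finset.mul_sum, ← Finset.sum_sub_distrib, ← Finset.sum_add_distrib]
    apply Finset.sum_congr rfl
    intro i _
    rw [hcsLow i, hcsUp i]; ring
  rw [key, hcl, hml, hcm, hmc, ← hc2, ← hm2, hAβ]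
  field_simp
  ring
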